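/- (Amice) The Amice transform $\mu \mapsto \mathcal{A}(\mu)$, sending a continuous linear functional $\mu$ on $C(\mathbb{Z}_p, \mathbb{Q}_p)$ to the power series $\sum_{k\geq 0} \mu(\binom{x}{k}) (q-1)^k$, is an isomorphism of $\mathbb{Q}_p$-Banach spaces from the space of measures on $\mathbb{Z}_p$ onto $\mathbb{Z}_p[[q-1]] \otimes_{\mathbb{Z}_p} \mathbb{Q}_p$ (power series with bounded coefficients), and it takes the convolution product of measures to the product of power series. -/

import Mathlib

/-- The Amice transform of a measure (continuous linear functional on `C(ℤ_p, ℚ_p)`):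
`𝒜(μ) = ∑ₖ μ((x choose k)) (q-1)ᵏ`, as a power series in `T = q - 1`. -/
noncomputable def amice {p : ℕ} [Fact p.Prime]
    (μ : C(ℤ_[p], ℚ_[p]) →L[ℚ_[p]] ℚ_[p]) : PowerSeries ℚ_[p] :=
  PowerSeries.mk fun k => μ ⟨fun x => ((mahler k x : ℤ_[p]) : ℚ_[p]),
    continuous_subtype_val.comp (mahler k).continuous⟩

open Filter PadicInt Finset
open scoped fwdDiff Topology

namespace AmiceAux

variable {p : ℕ} [Fact p.Prime]

/-- The Mahler function as a `ℚ_[p]`-valued continuous map. -/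
noncomputable def mahlerQ (k : ℕ) : C(ℤ_[p], ℚ_[p]) :=
  ⟨fun x => ((mahler k x : ℤ_[p]) : ℚ_[p]), continuous_subtype_val.comp (mahler k).continuous⟩

lemma mahlerQ_apply (k : ℕ) (x : ℤ_[p]) : mahlerQ k x = ((mahler k x : ℤ_[p]) : ℚ_[p]) := rfl

instance : IsBoundedSMul ℤ_[p] ℚ_[p] :=
  IsBoundedSMul.of_norm_smul_le fun r x => by
    rw [Algebra.smul_def, PadicInt.algebraMap_apply, norm_mul, PadicInt.norm_def]

lemma mahlerTerm_eq_smul (a : ℚ_[p]) (n : ℕ) :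
    mahlerTerm a n = a • (mahlerQ n : C(ℤ_[p], ℚ_[p])) := by
  ext x
  simp only [mahlerTerm_apply, ContinuousMap.smul_apply, smul_eq_mul, mahlerQ_apply]
  rw [mul_comm]
  rfl

lemma norm_mahlerQ (k : ℕ) : ‖(mahlerQ k : C(ℤ_[p], ℚ_[p]))‖ = 1 := by
  have h := norm_mahlerTerm (p := p) (1 : ℚ_[p]) k
  rw [mahlerTerm_eq_smul, one_smul, norm_one] at h
  exact h

lemma hasSum_integral (μ : C(ℤ_[p], ℚ_[p]) →L[ℚ_[p]] ℚ_[p]) (f : C(ℤ_[p], ℚ_[p])) :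
    HasSum (fun n => (Δ_[1])^[n] f 0 * μ (mahlerQ n)) (μ f) := by
  have h := (hasSum_mahler f).mapL μ
  convert h using 2 with n
  rw [mahlerTerm_eq_smul, map_smul, smul_eq_mul]

lemma fwdDiff_iter_mahler (k n : ℕ) :
    (Δ_[1])^[n] (⇑(mahlerQ k : C(ℤ_[p], ℚ_[p]))) 0 = if n = k then 1 else 0 := by
  have htend : Tendsto (fun n => if n = k then (1 : ℚ_[p]) else 0) atTop (𝓝 0) := by
    apply tendsto_atTop_of_eventually_const (i₀ := k + 1)
    intro i hi
    simp [Nat.ne_of_gt hi]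
  have hs : mahlerSeries (fun n => if n = k then (1 : ℚ_[p]) else 0)
      = (mahlerQ k : C(ℤ_[p], ℚ_[p])) := by
    rw [mahlerSeries, tsum_eq_single k]
    · simp [mahlerTerm_eq_smul]
    · intro n hn
      simp [mahlerTerm_eq_smul, hn]
  conv_lhs => rw [← hs]
  rw [fwdDiff_mahlerSeries htend]

end AmiceAux

lemma AmiceAux.coeff_amice {p : ℕ} [Fact p.Prime] (μ : C(ℤ_[p], ℚ_[p]) →L[ℚ_[p]] ℚ_[p])
    (k : ℕ) : PowerSeries.coeff k (amice μ) = μ (AmiceAux.mahlerQ k) := by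
  unfold amice
  rw [PowerSeries.coeff_mk]
  rfl

/-- **Amice's theorem.** The Amice transform is an isometric isomorphism from the space
of measures on `ℤ_p` onto the ring `ℤ_p[[q-1]] ⊗ ℚ_p` of power series with bounded
coefficients, and it takes convolution of measures to multiplication of power series. -/
theorem stmt5 (p : ℕ) [Fact p.Prime] :
    -- lands in bounded power series
    (∀ μ : C(ℤ_[p], ℚ_[p]) →L[ℚ_[p]] ℚ_[p],
      ∃ C : ℝ, ∀ k : ℕ, ‖PowerSeries.coeff k (amice μ)‖ ≤ C) ∧
    -- injective
    (Function.Injective (amice (p := p))) ∧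
    -- surjective onto bounded power series
    (∀ F : PowerSeries ℚ_[p], (∃ C : ℝ, ∀ k : ℕ, ‖PowerSeries.coeff k F‖ ≤ C) →
      ∃ μ : C(ℤ_[p], ℚ_[p]) →L[ℚ_[p]] ℚ_[p], amice μ = F) ∧
    -- isometric: the operator norm of `μ` is the sup of the coefficient norms
    (∀ μ : C(ℤ_[p], ℚ_[p]) →L[ℚ_[p]] ℚ_[p],
      ‖μ‖ = ⨆ k : ℕ, ‖PowerSeries.coeff k (amice μ)‖) ∧
    -- convolution goes to multiplication: if `ρ = μ * ν` in the sense that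
    -- `ρ(f) = μ(x ↦ ν(y ↦ f (x+y)))`, then `𝒜(ρ) = 𝒜(μ) ⬝ 𝒜(ν)`
    (∀ μ ν ρ : C(ℤ_[p], ℚ_[p]) →L[ℚ_[p]] ℚ_[p],
      (∀ f h : C(ℤ_[p], ℚ_[p]),
        (∀ x : ℤ_[p], h x = ν (f.comp ⟨fun y => x + y, by fun_prop⟩)) → ρ f = μ h) →
      amice ρ = amice μ * amice ν) := by
  open AmiceAux fwdDiff in
  refine ⟨?_, ?_, ?_, ?_, ?_⟩
  · -- boundedness
    intro μ
    refine ⟨‖μ‖, fun k => ?_⟩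
    simp only [coeff_amice]
    calc ‖μ (mahlerQ k)‖ ≤ ‖μ‖ * ‖(mahlerQ k : C(ℤ_[p], ℚ_[p]))‖ := μ.le_opNorm _
    _ = ‖μ‖ := by rw [norm_mahlerQ, mul_one]
  · -- injectivity
    intro μ ν hμν
    have hk : ∀ k, μ (mahlerQ k) = ν (mahlerQ k) := by
      intro k
      have := congrArg (PowerSeries.coeff k) hμν
      simpa only [coeff_amice] using this
    ext f
    refine HasSum.unique (hasSum_integral μ f) ?_
    simpa only [hk] using hasSum_integral ν f
  · -- surjectivity
    rintro F ⟨C, hC⟩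
    set a : ℕ → ℚ_[p] := fun k => PowerSeries.coeff k F with ha
    have hsum : ∀ f : C(ℤ_[p], ℚ_[p]),
        Summable (fun n => (Δ_[1])^[n] f 0 * a n) := by
      intro f
      refine NonarchimedeanAddGroup.summable_of_tendsto_cofinite_zero ?_
      rw [Nat.cofinite_eq_atTop]
      have h1 : Tendsto (fun n => ‖(Δ_[1])^[n] f 0‖ * max C 0) atTop (𝓝 (0 * max C 0)) := by
        refine Tendsto.mul_const _ ?_
        exact (tendsto_zero_iff_norm_tendsto_zero.mp (PadicInt.fwdDiff_tendsto_zero f))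
      rw [zero_mul] at h1
      rw [tendsto_zero_iff_norm_tendsto_zero]
      refine squeeze_zero (fun n => norm_nonneg _) (fun n => ?_) h1
      rw [_root_.norm_mul]
      exact mul_le_mul_of_nonneg_left ((hC n).trans (le_max_left _ _)) (norm_nonneg _)
    set L : C(ℤ_[p], ℚ_[p]) →ₗ[ℚ_[p]] ℚ_[p] :=
      { toFun := fun f => ∑' n, (Δ_[1])^[n] f 0 * a n
        map_add' := by
          intro f g
          have h : ∀ n, (Δ_[1])^[n] (⇑(f + g)) 0 * a n
              = (Δ_[1])^[n] f 0 * a n + (Δ_[1])^[n] g 0 * a n := by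
            intro n
            rw [ContinuousMap.coe_add, fwdDiff_iter_add, Pi.add_apply, add_mul]
          rw [tsum_congr h, Summable.tsum_add (hsum f) (hsum g)]
        map_smul' := by
          intro c f
          have h : ∀ n, (Δ_[1])^[n] (⇑(c • f)) 0 * a n = c * ((Δ_[1])^[n] f 0 * a n) := by
            intro n
            rw [ContinuousMap.coe_smul, fwdDiff_iter_const_smul, Pi.smul_apply, smul_eq_mul,
              mul_assoc]
          rw [tsum_congr h, tsum_mul_left]
          rfl } with hL
    refine ⟨L.mkContinuous (max C 0) (fun f => ?_), ?_⟩
    · show ‖∑' n, (Δ_[1])^[n] f 0 * a n‖ ≤ max C 0 * ‖f‖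
      refine IsUltrametricDist.norm_tsum_le_of_forall_le_of_nonneg
        (mul_nonneg (le_max_right _ _) (norm_nonneg _)) (fun n => ?_)
      rw [_root_.norm_mul, mul_comm (max C 0) ‖f‖]
      exact mul_le_mul (IsUltrametricDist.norm_fwdDiff_iter_apply_le 1 f 0 n)
        ((hC n).trans (le_max_left _ _)) (norm_nonneg _) (norm_nonneg _)
    · ext k
      simp only [coeff_amice, LinearMap.mkContinuous_apply, hL,
        LinearMap.coe_mk, AddHom.coe_mk]
      rw [tsum_eq_single k]
      · rw [AmiceAux.fwdDiff_iter_mahler]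
        simp [ha]
      · intro n hn
        rw [AmiceAux.fwdDiff_iter_mahler]
        simp [hn]
  · -- isometry
    intro μ
    simp only [coeff_amice]
    have hbdd : BddAbove (Set.range fun k => ‖μ (mahlerQ k)‖) := by
      refine ⟨‖μ‖, ?_⟩
      rintro x ⟨k, rfl⟩
      calc ‖μ (mahlerQ k)‖ ≤ ‖μ‖ * ‖(mahlerQ k : C(ℤ_[p], ℚ_[p]))‖ := μ.le_opNorm _
      _ = ‖μ‖ := by rw [norm_mahlerQ, mul_one]
    refine le_antisymm ?_ ?_
    · refine μ.opNorm_le_bound ((norm_nonneg _).trans (le_ciSup hbdd 0)) (fun f => ?_)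
      rw [← (hasSum_integral μ f).tsum_eq]
      refine IsUltrametricDist.norm_tsum_le_of_forall_le_of_nonneg
        (mul_nonneg ((norm_nonneg _).trans (le_ciSup hbdd 0)) (norm_nonneg _)) (fun n => ?_)
      rw [_root_.norm_mul, mul_comm _ ‖f‖]
      exact mul_le_mul (IsUltrametricDist.norm_fwdDiff_iter_apply_le 1 f 0 n)
        (le_ciSup hbdd n) (norm_nonneg _) (norm_nonneg _)
    · refine ciSup_le (fun k => ?_)
      calc ‖μ (mahlerQ k)‖ ≤ ‖μ‖ * ‖(mahlerQ k : C(ℤ_[p], ℚ_[p]))‖ := μ.le_opNorm _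
      _ = ‖μ‖ := by rw [norm_mahlerQ, mul_one]
  · -- convolution
    intro μ ν ρ hconv
    ext n
    set h : C(ℤ_[p], ℚ_[p]) :=
      ∑ ij ∈ antidiagonal n, ν (mahlerQ ij.2) • (mahlerQ ij.1 : C(ℤ_[p], ℚ_[p])) with hh
    have key : ∀ x : ℤ_[p],
        (mahlerQ n).comp (⟨fun y => x + y, by fun_prop⟩ : C(ℤ_[p], ℤ_[p]))
          = ∑ ij ∈ antidiagonal n, ((mahler ij.1 x : ℤ_[p]) : ℚ_[p]) • (mahlerQ ij.2 : C(ℤ_[p], ℚ_[p])) := by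
      intro x
      ext y
      simp only [ContinuousMap.comp_apply, ContinuousMap.coe_mk, mahlerQ_apply, mahler_apply,
        ContinuousMap.coe_sum, Finset.sum_apply, ContinuousMap.smul_apply, smul_eq_mul]
      rw [Ring.add_choose_eq n (Commute.all x y)]
      exact map_sum (PadicInt.Coe.ringHom) _ _
    have hx : ∀ x : ℤ_[p],
        h x = ν ((mahlerQ n).comp (⟨fun y => x + y, by fun_prop⟩ : C(ℤ_[p], ℤ_[p]))) := by
      intro x
      rw [key x, map_sum]
      simp only [hh, ContinuousMap.coe_sum, Finset.sum_apply, ContinuousMap.smul_apply,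
        map_smul, smul_eq_mul]
      exact Finset.sum_congr rfl (fun ij _ => mul_comm _ _)
    have := hconv (mahlerQ n) h hx
    simp only [coeff_amice, PowerSeries.coeff_mul]
    rw [this, hh, map_sum]
    refine Finset.sum_congr rfl (fun ij _ => ?_)
    rw [map_smul, smul_eq_mul, mul_comm]
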